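/- Let Ω ⊆ ℝ^n (n ∈ ℕ) be a nonempty measurable set of positive Lebesgue measure, let ρ > 0, and let B be a set of measurable functions on Ω (thought of as the unit ball of a quasinormed space X). Assume that for every ℓ ∈ ℕ there exist measurable functions u_1,…,u_ℓ : Ω → ℝ with pairwise disjoint supports such that u_i − u_j ∈ B for all distinct i,j ∈ {1,…,ℓ} and 2ρ > ess sup_Ω u_k > ρ for every k = 1,…,ℓ. Then for every m ∈ ℕ and all essentially bounded measurable v_1,…,v_m : Ω → ℝ there exists w ∈ B with ‖w − v_j‖_{L^∞(Ω)} ≥ ρ for every j = 1,…,m. In particular, the ball measure of non-compactness of the embedding I : X → L^∞(Ω) is at least ρ. -/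

import Mathlib

open MeasureTheory ENNReal
open scoped NNReal

/-- Let `Ω ⊆ ℝ^n` be a nonempty measurable set of positive measure,
`ρ > 0`, and `B` a set of measurable functions on `Ω` (the unit ball of a quasinormed
space `X`). Assume that for every `ℓ ∈ ℕ` there are measurable functions `u_1,…,u_ℓ`
with pairwise disjoint supports such that `u_i − u_j ∈ B` for all distinct `i,j` and
`2ρ > ess sup u_k > ρ` for every `k`. Then for every finite family `v_1,…,v_m` of
essentially bounded measurable functions there is `w ∈ B` with
`‖w − v_j‖_{L^∞(Ω)} ≥ ρ` for every `j`; in particular the ball measure of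
non-compactness of the embedding `I : X → L^∞(Ω)` is at least `ρ`. -/
theorem noncompactness_lower_bound_into_linfty
    (n : ℕ) (Ω : Set (Fin n → ℝ)) (hΩmeas : MeasurableSet Ω)
    (hΩne : Ω.Nonempty) (hΩpos : 0 < volume Ω)
    (ρ : ℝ) (hρ : 0 < ρ)
    (B : Set ((Fin n → ℝ) → ℝ))
    (hB : ∀ ℓ : ℕ, ∃ u : Fin ℓ → (Fin n → ℝ) → ℝ,
      (∀ k, Measurable (u k)) ∧
      (∀ i j, i ≠ j → Disjoint (Function.support (u i)) (Function.support (u j))) ∧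
      (∀ i j, i ≠ j → u i - u j ∈ B) ∧
      (∀ k, (ρ : EReal) < essSup (fun x => (u k x : EReal)) (volume.restrict Ω) ∧
        essSup (fun x => (u k x : EReal)) (volume.restrict Ω) < ((2 * ρ : ℝ) : EReal)))
    (m : ℕ) (v : Fin m → (Fin n → ℝ) → ℝ)
    (hv : ∀ j, Measurable (v j) ∧ eLpNorm (v j) ∞ (volume.restrict Ω) < ∞) :
    ∃ w ∈ B, ∀ j,
      ENNReal.ofReal ρ ≤ eLpNorm (fun x => w x - v j x) ∞ (volume.restrict Ω) := by
  classical
  set μ := volume.restrict Ω with hμdef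
  obtain ⟨u, humeas, hdisj, hsub, hess⟩ := hB (2 ^ m + 1)
  -- each set {ρ < u k} has positive measure
  have hA : ∀ k, μ {x | ρ < u k x} ≠ 0 := by
    intro k
    have h1 : (ρ : EReal) < Filter.limsup (fun x => (u k x : EReal)) (ae μ) := (hess k).1
    have hfreq : ∃ᶠ x in ae μ, (ρ : EReal) < (u k x : EReal) :=
      Filter.frequently_lt_of_lt_limsup (by isBoundedDefault) h1
    have : ∃ᶠ x in ae μ, ρ < u k x := by
      simpa [EReal.coe_lt_coe_iff] using hfreq
    rw [MeasureTheory.frequently_ae_iff] at this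
    exact this
  -- sign pattern
  have key : ∀ (i i' : Fin (2 ^ m + 1)) (j : Fin m), i ≠ i' →
      eLpNorm (fun x => (u i - u i') x - v j x) ∞ μ < ENNReal.ofReal ρ →
      (∀ᵐ x ∂μ, ρ < u i x → 0 < v j x) ∧ ¬ (∀ᵐ x ∂μ, ρ < u i' x → 0 < v j x) := by
    intro i i' j hne hlt
    have hae : ∀ᵐ x ∂μ, |u i x - u i' x - v j x| < ρ := by
      rw [eLpNorm_exponent_top, eLpNormEssSup] at hlt
      have := ae_lt_of_essSup_lt hlt
      filter_upwards [this] with x hx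
      have : (‖u i x - u i' x - v j x‖₊ : ℝ≥0∞) < ENNReal.ofReal ρ := by
        exact hx
      rw [ENNReal.ofReal, ENNReal.coe_lt_coe] at this
      calc |u i x - u i' x - v j x| = (‖u i x - u i' x - v j x‖₊ : ℝ) := by
            simp [Real.norm_eq_abs]
        _ < ρ.toNNReal := this
        _ ≤ ρ := by rw [Real.coe_toNNReal ρ hρ.le]
    constructor
    · filter_upwards [hae] with x hx hxi
      have hx0 : u i' x = 0 := by
        by_contra h
        exact (Set.disjoint_left.mp (hdisj i i' hne)
          (by simpa [Function.mem_support] using ne_of_gt (lt_trans hρ hxi))) h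
      have := abs_lt.mp hx
      linarith [this.1, this.2]
    · intro hpos
      have hneg : ∀ᵐ x ∂μ, ρ < u i' x → v j x < 0 := by
        filter_upwards [hae] with x hx hxi'
        have hx0 : u i x = 0 := by
          by_contra h
          exact (Set.disjoint_left.mp (hdisj i' i hne.symm)
            (by simpa [Function.mem_support] using ne_of_gt (lt_trans hρ hxi'))) h
        have := abs_lt.mp hx
        linarith [this.1, this.2]
      have : ∀ᵐ x ∂μ, ¬ (ρ < u i' x) := by
        filter_upwards [hpos, hneg] with x h1 h2 h3
        linarith [h1 h3, h2 h3]
      exact hA i' (by simpa [ae_iff] using this)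
  -- pigeonhole
  set σ : Fin (2 ^ m + 1) → (Fin m → Bool) :=
    fun k j => decide (∀ᵐ x ∂μ, ρ < u k x → 0 < v j x) with hσ
  obtain ⟨i, i', hne, heq⟩ := Fintype.exists_ne_map_eq_of_card_lt σ
    (by simp [Fintype.card_fun])
  refine ⟨u i - u i', hsub i i' hne, fun j => ?_⟩
  by_contra hcon
  rw [not_le] at hcon
  obtain ⟨h1, h2⟩ := key i i' j hne (by simpa using hcon)
  have : σ i j = σ i' j := by rw [heq]
  simp only [hσ, decide_eq_decide] at this
  exact h2 (this.mp h1)
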